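/- arXiv:2105.08713 — 2 statements merged into one kernel-verified Lean document; each statement's English description precedes it below -/
import Mathlib

section
/- For μ_1 ≤ μ_2 positive reals, L = 8, and R_min ∈ [1/3, 1/2], the minimum of 2(μ_1 d_1 + μ_2 d_2) over d_1 ≥ d_2 ≥ 0, d_1 + d_2 = D, (7/4)L ≤ D ≤ L/R_min, d_2 ≥ max{(3/2)L − (1/2)D, (5/2)L − D} equals min{16μ_1 + 12μ_2, 24μ_1 + 8μ_2, 8[3(μ_2 − μ_1) + (1/R_min)(3μ_1 − μ_2)]}. -/
/-- For `μ₁ ≤ μ₂` positive, `L = 8`, `R_min ∈ [1/3, 1/2]`, the minimum of the peak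
AoI `2(μ₁d₁ + μ₂d₂)` over the PIR constraint set (with `d₁ ≥ d₂`) equals
`min{16μ₁ + 12μ₂, 24μ₁ + 8μ₂, 8[3(μ₂ − μ₁) + (1/R_min)(3μ₁ − μ₂)]}`. -/
theorem stmt_3 (μ₁ μ₂ Rmin : ℝ) (hμ₁ : 0 < μ₁) (hμ₂ : 0 < μ₂) (hμ : μ₁ ≤ μ₂)
    (hR : Rmin ∈ Set.Icc (1 / 3 : ℝ) (1 / 2)) :
    IsLeast {y : ℝ | ∃ d₁ d₂ D : ℝ, d₁ ≥ d₂ ∧ d₂ ≥ 0 ∧ d₁ + d₂ = D ∧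
        (7 / 4) * 8 ≤ D ∧ D ≤ 8 / Rmin ∧
        d₂ ≥ max ((3 / 2) * 8 - (1 / 2) * D) ((5 / 2) * 8 - D) ∧
        y = 2 * (μ₁ * d₁ + μ₂ * d₂)}
      (min (min (16 * μ₁ + 12 * μ₂) (24 * μ₁ + 8 * μ₂))
        (8 * (3 * (μ₂ - μ₁) + (1 / Rmin) * (3 * μ₁ - μ₂)))) := by
  obtain ⟨hR1, hR2⟩ := hR
  have hRpos : 0 < Rmin := by linarith
  have ht1 : (2 : ℝ) ≤ 1 / Rmin := by
    rw [le_div_iff₀ hRpos]; linarith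
  have ht2 : (1 : ℝ) / Rmin ≤ 3 := by
    rw [div_le_iff₀ hRpos]; linarith
  set t := (1 : ℝ) / Rmin with htdef
  have h8t : 8 / Rmin = 8 * t := by rw [htdef]; ring
  constructor
  · -- membership: the min is one of three achieved values
    have hA : (16 * μ₁ + 12 * μ₂) ∈ {y : ℝ | ∃ d₁ d₂ D : ℝ, d₁ ≥ d₂ ∧ d₂ ≥ 0 ∧ d₁ + d₂ = D ∧
        (7 / 4) * 8 ≤ D ∧ D ≤ 8 / Rmin ∧
        d₂ ≥ max ((3 / 2) * 8 - (1 / 2) * D) ((5 / 2) * 8 - D) ∧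
        y = 2 * (μ₁ * d₁ + μ₂ * d₂)} := by
      refine ⟨8, 6, 14, by norm_num, by norm_num, by norm_num, by norm_num, ?_, ?_, by ring⟩
      · rw [h8t]; linarith
      · rw [ge_iff_le, max_le_iff]; norm_num
    have hB : (24 * μ₁ + 8 * μ₂) ∈ {y : ℝ | ∃ d₁ d₂ D : ℝ, d₁ ≥ d₂ ∧ d₂ ≥ 0 ∧ d₁ + d₂ = D ∧
        (7 / 4) * 8 ≤ D ∧ D ≤ 8 / Rmin ∧
        d₂ ≥ max ((3 / 2) * 8 - (1 / 2) * D) ((5 / 2) * 8 - D) ∧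
        y = 2 * (μ₁ * d₁ + μ₂ * d₂)} := by
      refine ⟨12, 4, 16, by norm_num, by norm_num, by norm_num, by norm_num, ?_, ?_, by ring⟩
      · rw [h8t]; linarith
      · rw [ge_iff_le, max_le_iff]; norm_num
    have hC : (8 * (3 * (μ₂ - μ₁) + (1 / Rmin) * (3 * μ₁ - μ₂))) ∈
        {y : ℝ | ∃ d₁ d₂ D : ℝ, d₁ ≥ d₂ ∧ d₂ ≥ 0 ∧ d₁ + d₂ = D ∧
        (7 / 4) * 8 ≤ D ∧ D ≤ 8 / Rmin ∧
        d₂ ≥ max ((3 / 2) * 8 - (1 / 2) * D) ((5 / 2) * 8 - D) ∧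
        y = 2 * (μ₁ * d₁ + μ₂ * d₂)} := by
      refine ⟨12 * t - 12, 12 - 4 * t, 8 * t, by linarith, by linarith, by ring, by linarith,
        ?_, ?_, by rw [← htdef]; ring⟩
      · rw [h8t]
      · rw [ge_iff_le, max_le_iff]; constructor <;> [linarith; linarith]
    rcases min_cases (min (16 * μ₁ + 12 * μ₂) (24 * μ₁ + 8 * μ₂))
        (8 * (3 * (μ₂ - μ₁) + (1 / Rmin) * (3 * μ₁ - μ₂))) with ⟨h, _⟩ | ⟨h, _⟩
    · rw [h]
      rcases min_cases (16 * μ₁ + 12 * μ₂) (24 * μ₁ + 8 * μ₂) with ⟨h', _⟩ | ⟨h', _⟩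
      · rw [h']; exact hA
      · rw [h']; exact hB
    · rw [h]; exact hC
  · -- lower bound
    rintro y ⟨d₁, d₂, D, h12, h20, hD, hDlo, hDhi, hmax, hy⟩
    rw [ge_iff_le, max_le_iff] at hmax
    obtain ⟨hm1, hm2⟩ := hmax
    -- constraints: d₁ + 3 d₂ ≥ 24, d₁ + 2 d₂ ≥ 20, d₁ + d₂ ≥ 14, d₁ + d₂ ≤ 8 t
    have c1 : d₁ + 3 * d₂ ≥ 24 := by linarith
    have c2 : d₁ + 2 * d₂ ≥ 20 := by linarith
    have c3 : d₁ + d₂ ≥ 14 := by linarith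
    have c4 : d₁ + d₂ ≤ 8 * t := by rw [← h8t]; linarith
    rcases le_total μ₂ (2 * μ₁) with hcase | hcase
    · -- y ≥ 16 μ₁ + 12 μ₂
      have hle : 16 * μ₁ + 12 * μ₂ ≤ y := by
        nlinarith [mul_nonneg (by linarith : (0:ℝ) ≤ 4 * μ₁ - 2 * μ₂) (by linarith : (0:ℝ) ≤ d₁ + d₂ - 14),
          mul_nonneg (by linarith : (0:ℝ) ≤ 2 * μ₂ - 2 * μ₁) (by linarith : (0:ℝ) ≤ d₁ + 2 * d₂ - 20)]
      calc min (min (16 * μ₁ + 12 * μ₂) (24 * μ₁ + 8 * μ₂))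
            (8 * (3 * (μ₂ - μ₁) + (1 / Rmin) * (3 * μ₁ - μ₂)))
          ≤ 16 * μ₁ + 12 * μ₂ := le_trans (min_le_left _ _) (min_le_left _ _)
        _ ≤ y := hle
    · rcases le_total μ₂ (3 * μ₁) with hcase2 | hcase2
      · -- y ≥ 24 μ₁ + 8 μ₂
        have hle : 24 * μ₁ + 8 * μ₂ ≤ y := by
          nlinarith [mul_nonneg (by linarith : (0:ℝ) ≤ 6 * μ₁ - 2 * μ₂) (by linarith : (0:ℝ) ≤ d₁ + 2 * d₂ - 20),
            mul_nonneg (by linarith : (0:ℝ) ≤ 2 * μ₂ - 4 * μ₁) (by linarith : (0:ℝ) ≤ d₁ + 3 * d₂ - 24)]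
        calc min (min (16 * μ₁ + 12 * μ₂) (24 * μ₁ + 8 * μ₂))
              (8 * (3 * (μ₂ - μ₁) + (1 / Rmin) * (3 * μ₁ - μ₂)))
            ≤ 24 * μ₁ + 8 * μ₂ := le_trans (min_le_left _ _) (min_le_right _ _)
          _ ≤ y := hle
      · -- y ≥ C
        have hCval : 8 * (3 * (μ₂ - μ₁) + (1 / Rmin) * (3 * μ₁ - μ₂))
            = 24 * (μ₂ - μ₁) - 8 * t * (μ₂ - 3 * μ₁) := by rw [← htdef]; ring
        have hle : 8 * (3 * (μ₂ - μ₁) + (1 / Rmin) * (3 * μ₁ - μ₂)) ≤ y := by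
          rw [hCval]
          nlinarith [mul_nonneg (by linarith : (0:ℝ) ≤ μ₂ - μ₁) (by linarith : (0:ℝ) ≤ d₁ + 3 * d₂ - 24),
            mul_nonneg (by linarith : (0:ℝ) ≤ μ₂ - 3 * μ₁) (by linarith : (0:ℝ) ≤ 8 * t - d₁ - d₂)]
        exact le_trans (min_le_right _ _) hle
end

section
/- For M = 2 messages and N servers, for any traffic ratio vector τ with τ_1 ≥ ... ≥ τ_N ≥ 0 and Σ τ_n = 1, the capacity expression C(τ) = min_{n_0 ∈ [N]} (1 + (Σ_{n=n_0+1}^N τ_n)/n_0)/(1 + 1/n_0) satisfies 1/2 ≤ C(τ) ≤ N/(N+1), with the upper bound attained when τ_n = 1/N for all n. -/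
open Finset

/-- For `M = 2` messages and `N` servers, for any decreasing probability vector
`τ`, the asymmetric-traffic capacity
`C(τ) = min_{n₀ ∈ [N]} (1 + (∑_{n > n₀} τ_n)/n₀)/(1 + 1/n₀)` satisfies
`1/2 ≤ C(τ) ≤ N/(N+1)`, with the upper bound attained when `τ_n = 1/N` for all `n`. -/
theorem stmt_14 (N : ℕ) (hN : 0 < N) (τ : Fin N → ℝ)
    (hdec : Antitone τ) (hnonneg : ∀ n, 0 ≤ τ n) (hsum : ∑ n, τ n = 1) :
    let C : ℝ := (Finset.univ.inf' (Finset.univ_nonempty_iff.mpr ⟨⟨0, hN⟩⟩)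
      (fun n₀ : Fin N =>
        (1 + (∑ n : Fin N, if n₀ < n then τ n else 0) / ((n₀ : ℕ) + 1)) /
          (1 + 1 / ((n₀ : ℕ) + 1))))
    (1 / 2 ≤ C ∧ C ≤ N / (N + 1)) ∧ ((∀ n, τ n = 1 / N) → C = N / (N + 1)) := by
  intro C
  set f : Fin N → ℝ := fun n₀ : Fin N =>
      (1 + (∑ n : Fin N, if n₀ < n then τ n else 0) / ((n₀ : ℕ) + 1)) /
        (1 + 1 / ((n₀ : ℕ) + 1)) with hf
  have hCdef : C = Finset.univ.inf' (Finset.univ_nonempty_iff.mpr ⟨⟨0, hN⟩⟩) f := rfl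
  have hS0 : ∀ n₀ : Fin N, 0 ≤ ∑ n : Fin N, if n₀ < n then τ n else 0 := by
    intro n₀
    exact Finset.sum_nonneg fun n _ => by split <;> simp [hnonneg n]
  have hfeq : ∀ n₀ : Fin N,
      f n₀ = (((n₀ : ℕ) : ℝ) + 1 + (∑ n : Fin N, if n₀ < n then τ n else 0)) /
        (((n₀ : ℕ) : ℝ) + 2) := by
    intro n₀
    have hk : (0 : ℝ) < ((n₀ : ℕ) : ℝ) + 1 := by positivity
    rw [hf]
    rw [div_eq_div_iff (by positivity) (by positivity)]
    have hk' : ((n₀ : ℕ) : ℝ) + 1 ≠ 0 := ne_of_gt hk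
    field_simp
    try ring
    try exact Or.inl trivial
  -- lower bound on each term
  have hlow : ∀ n₀ : Fin N, 1 / 2 ≤ f n₀ := by
    intro n₀
    rw [hfeq n₀]
    have hS := hS0 n₀
    have hk : (0 : ℝ) ≤ ((n₀ : ℕ) : ℝ) := Nat.cast_nonneg _
    rw [div_le_div_iff₀ (by norm_num) (by positivity)]
    linarith
  -- the top index
  have hNlt : N - 1 < N := by omega
  set last : Fin N := ⟨N - 1, hNlt⟩ with hlast
  have hlastval : (((last : ℕ) : ℝ) + 1) = (N : ℝ) := by
    have h : ((last : ℕ)) = N - 1 := rfl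
    rw [h, Nat.cast_sub hN]
    push_cast; ring
  have hSlast : (∑ n : Fin N, if last < n then τ n else 0) = 0 := by
    apply Finset.sum_eq_zero
    intro n _
    have : ¬ last < n := by
      simp only [Fin.lt_def, hlast]
      omega
    simp [this]
  have hflast : f last = (N : ℝ) / ((N : ℝ) + 1) := by
    rw [hfeq, hSlast]
    have h1 : (((last : ℕ) : ℝ) + 1 + 0) = (N : ℝ) := by rw [add_zero, hlastval]
    have h2 : (((last : ℕ) : ℝ) + 2) = (N : ℝ) + 1 := by
      have := hlastval; linarith
    rw [h1, h2]
  have hub : C ≤ (N : ℝ) / ((N : ℝ) + 1) := by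
    rw [hCdef, ← hflast]
    exact Finset.inf'_le f (Finset.mem_univ last)
  have hlb : 1 / 2 ≤ C := by
    rw [hCdef]
    exact Finset.le_inf' _ _ fun n₀ _ => hlow n₀
  refine ⟨⟨hlb, by exact_mod_cast hub⟩, ?_⟩
  intro hτ
  have hNR : (0 : ℝ) < (N : ℝ) := by exact_mod_cast hN
  have hge : (N : ℝ) / ((N : ℝ) + 1) ≤ C := by
    rw [hCdef]
    apply Finset.le_inf'
    intro n₀ _
    have hScalc : (∑ n : Fin N, if n₀ < n then τ n else 0)
        = ((N - 1 - (n₀ : ℕ) : ℕ) : ℝ) * (1 / (N : ℝ)) := by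
      have : (∑ n : Fin N, if n₀ < n then τ n else 0)
          = ∑ n ∈ Finset.univ.filter (fun n => n₀ < n), τ n := by
        rw [Finset.sum_filter]
      rw [this, Finset.filter_lt_eq_Ioi, Finset.sum_congr rfl (fun n _ => hτ n),
        Finset.sum_const, Fin.card_Ioi, nsmul_eq_mul]
    have hk : (n₀ : ℕ) < N := n₀.isLt
    have hcast : ((N - 1 - (n₀ : ℕ) : ℕ) : ℝ) = (N : ℝ) - 1 - ((n₀ : ℕ) : ℝ) := by
      have h1 : N - 1 - (n₀ : ℕ) = N - (1 + (n₀ : ℕ)) := by omega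
      rw [h1, Nat.cast_sub (by omega)]
      push_cast; ring
    have hn0 : (0 : ℝ) ≤ ((n₀ : ℕ) : ℝ) := Nat.cast_nonneg _
    have hkR : ((n₀ : ℕ) : ℝ) ≤ (N : ℝ) - 1 := by
      have : ((n₀ : ℕ) : ℝ) + 1 ≤ (N : ℝ) := by exact_mod_cast hk
      linarith
    have hNe : (N : ℝ) ≠ 0 := ne_of_gt hNR
    have hnum : (((n₀ : ℕ) : ℝ) + 1 + ((N : ℝ) - 1 - ((n₀ : ℕ) : ℝ)) * (1 / (N : ℝ)))
        = (((n₀ : ℕ) : ℝ) * N + 2 * N - 1 - ((n₀ : ℕ) : ℝ)) / (N : ℝ) := by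
      field_simp; ring
    rw [hfeq, hScalc, hcast, hnum, div_div,
      div_le_div_iff₀ (by positivity) (by positivity)]
    nlinarith [hNR, hn0, hkR]
  have heq := le_antisymm hub hge
  exact_mod_cast heq
end
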